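/- arXiv:1012.1394 — 2 statements merged into one kernel-verified Lean document; each statement's English description precedes it below -/
import Mathlib

section
/- Let R be a noetherian commutative ring and M an R-module. If Ext^i_R(M, κ(p)) = 0 for every i > 0 and every prime ideal p of R, then M is a flat R-module. -/
open CategoryTheory

universe u

open LinearMap TensorProduct

variable {R : Type u} [CommRing R]

lemma tensor_comm_sq {A B X Y : Type u} [AddCommGroup A] [AddCommGroup B] [AddCommGroup X]
    [AddCommGroup Y] [Module R A] [Module R B] [Module R X] [Module R Y]
    (f : A →ₗ[R] B) (g : X →ₗ[R] Y) (z : A ⊗[R] X) :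
    rTensor Y f (lTensor A g z) = lTensor B g (rTensor X f z) := by
  rw [← LinearMap.comp_apply, ← LinearMap.comp_apply, rTensor_comp_lTensor, lTensor_comp_rTensor]

/-- `κ(p)`: the residue field of the localization of `R` at the prime `p`. -/
noncomputable abbrev kappa {R : Type u} [CommRing R] (p : Ideal R) [p.IsPrime] : Type u :=
  IsLocalRing.ResidueField (Localization.AtPrime p)

section KappaFacts
variable {R : Type u} [CommRing R] (p : Ideal R) [p.IsPrime]

lemma algebraMap_kappa_eq_zero_iff (x : R) : algebraMap R (kappa p) x = 0 ↔ x ∈ p := by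
  rw [IsScalarTower.algebraMap_apply R (Localization.AtPrime p) (kappa p),
    IsLocalRing.ResidueField.algebraMap_eq, IsLocalRing.residue_eq_zero_iff]
  constructor
  · intro h
    have h2 : x ∈ Ideal.comap (algebraMap R (Localization.AtPrime p))
        (IsLocalRing.maximalIdeal (Localization.AtPrime p)) := Ideal.mem_comap.mpr h
    rwa [← Ideal.under_def, Localization.AtPrime.comap_maximalIdeal] at h2
  · intro h
    have h2 : x ∈ Ideal.comap (algebraMap R (Localization.AtPrime p))
        (IsLocalRing.maximalIdeal (Localization.AtPrime p)) := by
      rw [← Ideal.under_def, Localization.AtPrime.comap_maximalIdeal]; exact h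
    exact Ideal.mem_comap.mp h2

lemma kappa_torsion (y : kappa p) : ∃ (x : R) (s : R), s ∈ p.primeCompl ∧
    s • y = algebraMap R (kappa p) x := by
  obtain ⟨z, rfl⟩ := IsLocalRing.residue_surjective y
  obtain ⟨⟨x, s⟩, hxs⟩ := IsLocalization.mk'_surjective p.primeCompl z
  refine ⟨x, s, s.2, ?_⟩
  have h1 : (algebraMap R (Localization.AtPrime p) s) * z = algebraMap R _ x := by
    rw [← hxs, mul_comm]
    exact IsLocalization.mk'_spec _ x s
  have h2 : (Ideal.Quotient.mk (IsLocalRing.maximalIdeal (Localization.AtPrime p))) z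
      = IsLocalRing.residue _ z := rfl
  rw [Algebra.smul_def,
    IsScalarTower.algebraMap_apply R (Localization.AtPrime p) (kappa p),
    IsScalarTower.algebraMap_apply R (Localization.AtPrime p) (kappa p),
    IsLocalRing.ResidueField.algebraMap_eq, ← map_mul, h1]

end KappaFacts

lemma exact_lTensor_of_hom_exact (k : Type u) [Field k] [Algebra R k]
    {A B C : Type u} [AddCommGroup A] [AddCommGroup B] [AddCommGroup C]
    [Module R A] [Module R B] [Module R C]
    (f : A →ₗ[R] B) (g : B →ₗ[R] C)
    (hHom : ∀ φ : B →ₗ[R] k, φ ∘ₗ f = 0 → ∃ ψ : C →ₗ[R] k, ψ ∘ₗ g = φ)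
    (z : k ⊗[R] B) (hz : lTensor k g z = 0) :
    ∃ w : k ⊗[R] A, lTensor k f w = z := by
  by_contra hzU
  set U : Submodule k (k ⊗[R] B) := LinearMap.range (f.baseChange k) with hU
  have hzU' : z ∉ U := by
    intro hmem
    obtain ⟨w, hw⟩ := hmem
    exact hzU ⟨w, by rw [← baseChange_eq_ltensor]; exact hw⟩
  have hzbar : U.mkQ z ≠ 0 := by
    intro h0
    exact hzU' ((Submodule.Quotient.mk_eq_zero U).mp h0)
  have : ¬ (∀ δ : Module.Dual k ((k ⊗[R] B) ⧸ U), δ (U.mkQ z) = 0) := by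
    rw [Module.forall_dual_apply_eq_zero_iff]; exact hzbar
  push_neg at this
  obtain ⟨δ, hδ⟩ := this
  set Φ : (k ⊗[R] B) →ₗ[k] k := δ ∘ₗ U.mkQ with hΦ
  have hΦf : ∀ a : A, Φ (f.baseChange k (1 ⊗ₜ a)) = 0 := by
    intro a
    have : f.baseChange k (1 ⊗ₜ a) ∈ U := ⟨1 ⊗ₜ a, rfl⟩
    have h0 : U.mkQ (f.baseChange k (1 ⊗ₜ a)) = 0 := by
      rw [Submodule.mkQ_apply, Submodule.Quotient.mk_eq_zero]; exact this
    simp only [hΦ, LinearMap.comp_apply, h0, map_zero]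
  set φ : B →ₗ[R] k := (Φ.restrictScalars R) ∘ₗ (TensorProduct.mk R k B 1) with hφ
  have hφf : φ ∘ₗ f = 0 := by
    ext a
    have := hΦf a
    rw [baseChange_tmul] at this
    simpa [hφ] using this
  obtain ⟨ψ, hψ⟩ := hHom φ hφf
  set Ψ : (k ⊗[R] C) →ₗ[k] k := LinearMap.liftBaseChange k ψ with hΨ
  have key : ∀ v : k ⊗[R] B, Φ v = Ψ (lTensor k g v) := by
    intro v
    induction v using TensorProduct.induction_on with
    | zero => simp
    | tmul c b =>
        have h1 : (c ⊗ₜ[R] b : k ⊗[R] B) = c • ((1 : k) ⊗ₜ[R] b) := by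
          rw [smul_tmul', smul_eq_mul, mul_one]
        rw [lTensor_tmul, hΨ, LinearMap.liftBaseChange_tmul, h1, map_smul]
        have : ψ (g b) = φ b := by
          have := congrArg (fun (u : B →ₗ[R] k) => u b) hψ
          simpa using this
        rw [this]
        simp [hφ]
    | add x y hx hy => rw [map_add, map_add, map_add, hx, hy]
  have : Φ z = 0 := by rw [key z, hz, map_zero]
  rw [hΦ, LinearMap.comp_apply] at this
  exact hδ this

/-- Packaged data of a flat (projective) resolution truncated to positive degrees. -/
structure ResData (R : Type u) [CommRing R] where
  C : ℕ → Type u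
  acg : ∀ n, AddCommGroup (C n)
  mod : ∀ n, @Module R (C n) _ (acg n).toAddCommMonoid
  D : ∀ n, @LinearMap R R _ _ (RingHom.id R) (C (n+1)) (C n) (acg (n+1)).toAddCommMonoid
    (acg n).toAddCommMonoid (mod (n+1)) (mod n)
  flat : ∀ n, @Module.Flat R (C n) _ (acg n).toAddCommMonoid (mod n)
  dd : ∀ n, (D n) ∘ₗ (D (n+1)) = 0
  hexact : ∀ n, Function.Exact (D (n+1)) (D n)

attribute [instance] ResData.acg ResData.mod ResData.flat

namespace ResData

variable (Γ : ResData R)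

/-- `Tor_{n+1}(N, M) = 0` for the module resolved by `Γ`. -/
def E (N : Type u) [AddCommGroup N] [Module R N] (n : ℕ) : Prop :=
  ∀ z : N ⊗[R] Γ.C (n+1), lTensor N (Γ.D n) z = 0 →
    ∃ w : N ⊗[R] Γ.C (n+2), lTensor N (Γ.D (n+1)) w = z

variable {Γ}

lemma lTensor_dd (N : Type u) [AddCommGroup N] [Module R N] (n : ℕ)
    (w : N ⊗[R] Γ.C (n+2)) : lTensor N (Γ.D n) (lTensor N (Γ.D (n+1)) w) = 0 := by
  rw [← LinearMap.comp_apply, ← lTensor_comp, Γ.dd n, lTensor_zero, LinearMap.zero_apply]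

lemma E_congr {N N' : Type u} [AddCommGroup N] [Module R N] [AddCommGroup N'] [Module R N']
    (e : N ≃ₗ[R] N') {n : ℕ} (hE : Γ.E N n) : Γ.E N' n := by
  intro z hz
  obtain ⟨w, hw⟩ := hE (rTensor _ (e.symm : N' →ₗ[R] N) z) (by
    rw [← tensor_comm_sq, hz, map_zero])
  refine ⟨rTensor _ (e : N →ₗ[R] N') w, ?_⟩
  rw [← tensor_comm_sq, hw, ← LinearMap.comp_apply, ← rTensor_comp]
  have : (e : N →ₗ[R] N') ∘ₗ (e.symm : N' →ₗ[R] N) = LinearMap.id := by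
    ext x; simp
  rw [this, rTensor_id, LinearMap.id_apply]

lemma E_of_subsingleton {N : Type u} [AddCommGroup N] [Module R N] [Subsingleton N] (n : ℕ) :
    Γ.E N n := by
  intro z _
  refine ⟨0, ?_⟩
  obtain ⟨S, hS⟩ := TensorProduct.exists_finset z
  have : z = 0 := by
    rw [hS]
    refine Finset.sum_eq_zero fun i _ => ?_
    rw [Subsingleton.elim i.1 0, zero_tmul]
  rw [this, map_zero]

/-- Middle term of a short exact sequence. -/
lemma E_of_ses {A B Cc : Type u} [AddCommGroup A] [Module R A] [AddCommGroup B] [Module R B]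
    [AddCommGroup Cc] [Module R Cc]
    (f : A →ₗ[R] B) (g : B →ₗ[R] Cc) (hf : Function.Injective f) (hg : Function.Surjective g)
    (hfg : Function.Exact f g) {n : ℕ}
    (hA : Γ.E A n) (hC : Γ.E Cc n) : Γ.E B n := by
  intro z hz
  obtain ⟨wC, hwC⟩ := hC (rTensor _ g z) (by
    rw [← tensor_comm_sq g (Γ.D n) z, hz, map_zero])
  obtain ⟨w, hw⟩ := rTensor_surjective (Γ.C (n+2)) hg wC
  set z' : B ⊗[R] Γ.C (n+1) := z - lTensor B (Γ.D (n+1)) w with hz'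
  have hz'g : rTensor _ g z' = 0 := by
    rw [hz', map_sub, tensor_comm_sq g (Γ.D (n+1)) w, hw, hwC, sub_self]
  obtain ⟨zA, hzA⟩ := (rTensor_exact (Γ.C (n+1)) hfg hg z').mp hz'g
  have hinj : Function.Injective (rTensor (Γ.C n) f) :=
    Module.Flat.rTensor_preserves_injective_linearMap f hf
  have hcycle : lTensor A (Γ.D n) zA = 0 := by
    apply hinj
    rw [map_zero, tensor_comm_sq f (Γ.D n) zA, hzA, hz', map_sub, hz, lTensor_dd, sub_self]
  obtain ⟨wA, hwA⟩ := hA zA hcycle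
  refine ⟨w + rTensor _ f wA, ?_⟩
  rw [map_add, ← tensor_comm_sq f (Γ.D (n+1)) wA, hwA, hzA, hz']
  abel

/-- Sub term of a short exact sequence, by dimension shifting. -/
lemma E_of_ses_left {A B Cc : Type u} [AddCommGroup A] [Module R A] [AddCommGroup B] [Module R B]
    [AddCommGroup Cc] [Module R Cc]
    (f : A →ₗ[R] B) (g : B →ₗ[R] Cc) (hf : Function.Injective f) (hg : Function.Surjective g)
    (hfg : Function.Exact f g) {n : ℕ}
    (hB : Γ.E B n) (hC : Γ.E Cc (n+1)) : Γ.E A n := by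
  intro z hz
  have hgf : ∀ a, g (f a) = 0 := fun a => hfg.apply_apply_eq_zero a
  obtain ⟨wB, hwB⟩ := hB (rTensor _ f z) (by
    rw [← tensor_comm_sq f (Γ.D n) z, hz, map_zero])
  have hwC0 : lTensor Cc (Γ.D (n+1)) (rTensor _ g wB) = 0 := by
    rw [← tensor_comm_sq g (Γ.D (n+1)) wB, hwB, ← LinearMap.comp_apply, ← rTensor_comp]
    have : g ∘ₗ f = 0 := by ext a; exact hgf a
    rw [this, rTensor_zero, LinearMap.zero_apply]
  obtain ⟨vC, hvC⟩ := hC (rTensor _ g wB) hwC0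
  obtain ⟨v, hv⟩ := rTensor_surjective (Γ.C (n+3)) hg vC
  set wB' : B ⊗[R] Γ.C (n+2) := wB - lTensor B (Γ.D (n+2)) v with hwB'
  have hwB'g : rTensor _ g wB' = 0 := by
    rw [hwB', map_sub, tensor_comm_sq g (Γ.D (n+2)) v, hv, hvC, sub_self]
  obtain ⟨u, hu⟩ := (rTensor_exact (Γ.C (n+2)) hfg hg wB').mp hwB'g
  refine ⟨u, ?_⟩
  have hinj : Function.Injective (rTensor (Γ.C (n+1)) f) :=
    Module.Flat.rTensor_preserves_injective_linearMap f hf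
  apply hinj
  rw [tensor_comm_sq f (Γ.D (n+1)) u, hu, hwB', map_sub, hwB, lTensor_dd, sub_zero]

/-- `E` passes to directed unions: if every f.g. submodule is contained in a submodule
satisfying `E`, then the whole module does. -/
lemma E_of_fg_submodules {N : Type u} [AddCommGroup N] [Module R N] {n : ℕ}
    (hN : ∀ N' : Submodule R N, N'.FG → Γ.E N' n) : Γ.E N n := by
  classical
  intro z hz
  obtain ⟨S, hS⟩ := TensorProduct.exists_finset z
  set N' : Submodule R N := Submodule.span R (S.image Prod.fst : Set N) with hN'
  have hfg : N'.FG := ⟨S.image Prod.fst, rfl⟩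
  set z' : N' ⊗[R] Γ.C (n+1) :=
    ∑ i ∈ S.attach, (⟨i.1.1, Submodule.subset_span
      (Finset.mem_coe.mpr (Finset.mem_image_of_mem Prod.fst i.2))⟩ : N') ⊗ₜ[R] i.1.2
    with hz'def
  have hz'z : rTensor _ N'.subtype z' = z := by
    rw [hz'def, map_sum, hS, ← Finset.sum_attach S (fun i => i.1 ⊗ₜ[R] i.2)]
    rfl
  have hinj : Function.Injective (rTensor (Γ.C n) N'.subtype) :=
    Module.Flat.rTensor_preserves_injective_linearMap _ N'.injective_subtype
  have hz'c : lTensor N' (Γ.D n) z' = 0 := by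
    apply hinj
    rw [map_zero, tensor_comm_sq N'.subtype (Γ.D n) z', hz'z, hz]
  obtain ⟨w', hw'⟩ := hN N' hfg z' hz'c
  refine ⟨rTensor _ N'.subtype w', ?_⟩
  rw [← tensor_comm_sq N'.subtype (Γ.D (n+1)) w', hw', hz'z]


/-- Dévissage: `E` holds for finite modules provided it holds for `R ⧸ q` for the relevant
primes. -/
lemma E_of_finite [IsNoetherianRing R] {N : Type u} [AddCommGroup N] [Module R N]
    [Module.Finite R N]
    (hq : ∀ q : Ideal R, q.IsPrime → Module.annihilator R N ≤ q → ∀ n, Γ.E (R ⧸ q) n) :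
    ∀ n, Γ.E N n := by
  haveI : IsNoetherian R N := inferInstance
  obtain ⟨N', hN'mem, hN'max⟩ := set_has_maximal_iff_noetherian.mpr ‹IsNoetherian R N›
    {N' : Submodule R N | ∀ n, Γ.E (↥N') n}
    ⟨⊥, fun n => E_of_subsingleton n⟩
  by_cases htop : N' = ⊤
  · subst htop
    exact fun n => E_congr (Submodule.topEquiv) (hN'mem n)
  · exfalso
    haveI : Nontrivial (N ⧸ N') := Submodule.Quotient.nontrivial_iff.mpr htop
    obtain ⟨x, hx⟩ := exists_ne (0 : N ⧸ N')
    obtain ⟨P, hP, -⟩ := exists_le_isAssociatedPrime_of_isNoetherianRing R x hx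
    obtain ⟨hPprime, y, hy⟩ := isAssociatedPrime_iff.mp hP
    have hy0 : y ≠ 0 := by
      rintro rfl
      apply hPprime.ne_top
      rw [hy]
      ext r; simp [Submodule.mem_colon_singleton]
    have hannN : Module.annihilator R N ≤ P := by
      intro r hr
      rw [hy, Submodule.mem_colon_singleton, Submodule.mem_bot]
      obtain ⟨u, rfl⟩ := Submodule.Quotient.mk_surjective N' y
      rw [← Submodule.Quotient.mk_smul, Module.mem_annihilator.mp hr u]
      rfl
    -- the submodule `N''`
    set N'' : Submodule R N := Submodule.comap N'.mkQ (Submodule.span R {y}) with hN''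
    have hle : N' ≤ N'' := by
      intro v hv
      simp only [hN'', Submodule.mem_comap]
      rw [show N'.mkQ v = 0 from (Submodule.Quotient.mk_eq_zero N').mpr hv]
      exact Submodule.zero_mem _
    have hlt : N' < N'' := by
      obtain ⟨u, hu⟩ := Submodule.Quotient.mk_surjective N' y
      refine lt_of_le_of_ne hle (fun he => ?_)
      apply hy0
      have hmem : u ∈ N'' := by
        simp only [hN'', Submodule.mem_comap]
        rw [show N'.mkQ u = y from hu]
        exact Submodule.mem_span_singleton_self y
      rw [← he] at hmem
      rw [← hu, Submodule.Quotient.mk_eq_zero]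
      exact hmem
    -- the map `h : N'' → N ⧸ N'` with range `R ∙ y` and kernel `N' ⊆ N''`
    set h : ↥N'' →ₗ[R] N ⧸ N' := N'.mkQ ∘ₗ N''.subtype with hh
    have hrange : LinearMap.range h = Submodule.span R {y} := by
      rw [hh, LinearMap.range_comp, Submodule.range_subtype, hN'', Submodule.map_comap_eq,
        Submodule.range_mkQ, top_inf_eq]
    have hmem : ∀ b : ↥N'', h b ∈ Submodule.span R {y} := fun b => hrange ▸ ⟨b, rfl⟩
    set g : ↥N'' →ₗ[R] ↥(Submodule.span R {y}) := h.codRestrict _ hmem with hg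
    have hgsurj : Function.Surjective g := by
      rintro ⟨t, ht⟩
      rw [← hrange] at ht
      obtain ⟨b, hb⟩ := ht
      exact ⟨b, Subtype.ext hb⟩
    have hker : LinearMap.ker (LinearMap.toSpanSingleton R (N ⧸ N') y) = P := by
      ext r
      rw [LinearMap.mem_ker, hy, Submodule.mem_colon_singleton, Submodule.mem_bot]
      rfl
    set e : (R ⧸ P) ≃ₗ[R] ↥(Submodule.span R {y}) :=
      (Submodule.quotEquivOfEq P _ hker.symm).trans
        ((LinearMap.toSpanSingleton R (N ⧸ N') y).quotKerEquivRange.trans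
          (LinearEquiv.ofEq _ _ (LinearMap.span_singleton_eq_range R (N ⧸ N') y).symm)) with he
    have hexact : Function.Exact (Submodule.inclusion hle) g := by
      intro v
      constructor
      · intro hv
        have : h v = 0 := by
          have := congrArg (Submodule.subtype _) hv
          simpa [hg] using congrArg Subtype.val hv
        have hvN' : (v : N) ∈ N' := by
          rwa [hh, LinearMap.comp_apply, Submodule.mkQ_apply, Submodule.Quotient.mk_eq_zero]
            at this
        exact ⟨⟨(v : N), hvN'⟩, Subtype.ext rfl⟩
      · rintro ⟨⟨u, hu⟩, rfl⟩
        apply Subtype.ext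
        show h _ = 0
        rw [hh, LinearMap.comp_apply, Submodule.mkQ_apply, Submodule.Quotient.mk_eq_zero]
        exact hu
    have hEN'' : ∀ n, Γ.E (↥N'') n := fun n =>
      E_of_ses (Submodule.inclusion hle) g (Submodule.inclusion_injective hle) hgsurj hexact
        (hN'mem n) (E_congr e (hq P hPprime hannN n))
    exact hN'max N'' hEN'' hlt


/-- The crucial noetherian induction over primes. -/
lemma E_quotient_prime [IsNoetherianRing R]
    (hk : ∀ (p : Ideal R) (_ : p.IsPrime), ∀ n, Γ.E (kappa p) n) :
    ∀ (p : Ideal R), p.IsPrime → ∀ n, Γ.E (R ⧸ p) n := by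
  have wf : WellFounded ((· > ·) : Ideal R → Ideal R → Prop) :=
    (IsNoetherian.wellFoundedGT (inferInstance : IsNoetherian R R)).wf
  intro p
  induction p using WellFounded.induction wf with
  | _ p IH =>
  intro hp n
  set ρ : R →ₗ[R] kappa p := Algebra.linearMap R (kappa p) with hρ
  have hker : LinearMap.ker ρ = p := by
    ext x
    rw [LinearMap.mem_ker]
    exact algebraMap_kappa_eq_zero_iff p x
  set fbar : (R ⧸ p) →ₗ[R] kappa p := Submodule.liftQ p ρ (le_of_eq hker.symm) with hfbar
  have hfinj : Function.Injective fbar := by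
    rw [← LinearMap.ker_eq_bot]
    exact Submodule.ker_liftQ_eq_bot p ρ _ (le_of_eq hker)
  have hfrange : LinearMap.range fbar = LinearMap.range ρ := Submodule.range_liftQ p ρ _
  set QM : Type u := kappa p ⧸ (LinearMap.range fbar) with hQM
  have hgsurj : Function.Surjective (LinearMap.range fbar).mkQ := Submodule.mkQ_surjective _
  have hexact : Function.Exact fbar (LinearMap.range fbar).mkQ :=
    LinearMap.exact_map_mkQ_range fbar
  -- every element of QM is killed by p and by some s ∉ p
  have hp_smul : ∀ (r : R), r ∈ p → ∀ t : QM, r • t = 0 := by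
    intro r hr t
    obtain ⟨y, rfl⟩ := Submodule.Quotient.mk_surjective _ t
    rw [← Submodule.Quotient.mk_smul, Algebra.smul_def,
      (algebraMap_kappa_eq_zero_iff p r).mpr hr, zero_mul]
    rfl
  have hs_smul : ∀ t : QM, ∃ s : R, s ∈ p.primeCompl ∧ s • t = 0 := by
    intro t
    obtain ⟨y, rfl⟩ := Submodule.Quotient.mk_surjective _ t
    obtain ⟨x, s, hs, hsy⟩ := kappa_torsion p y
    refine ⟨s, hs, ?_⟩
    rw [← Submodule.Quotient.mk_smul, hsy, Submodule.Quotient.mk_eq_zero, hfrange]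
    exact ⟨x, rfl⟩
  -- `E` holds for `QM` in all degrees
  have hQ : ∀ m, Γ.E QM m := by
    intro m
    apply E_of_fg_submodules
    intro N' hN'fg
    haveI : Module.Finite R ↥N' := Module.Finite.iff_fg.mpr hN'fg
    obtain ⟨T, hT⟩ := hN'fg
    -- a single `s ∉ p` killing `N'`
    choose sel hsel1 hsel2 using hs_smul
    classical
    set s : R := ∏ t ∈ T.attach, sel t.1 with hs
    have hsp : s ∈ p.primeCompl := Submonoid.prod_mem _ (fun t _ => hsel1 t.1)
    have hskill : ∀ t : QM, t ∈ T → s • t = 0 := by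
      intro t ht
      have : s = (∏ t' ∈ T.attach.erase ⟨t, ht⟩, sel t'.1) * sel t := by
        rw [hs, ← Finset.prod_erase_mul T.attach _ (Finset.mem_attach T ⟨t, ht⟩)]
      rw [this, mul_smul, hsel2 t, smul_zero]
    have hsN' : ∀ m' : ↥N', s • m' = 0 := by
      intro m'
      have hmem : (m' : QM) ∈ Submodule.span R (T : Set QM) := by rw [hT]; exact m'.2
      have hsub : Submodule.span R (T : Set QM) ≤ LinearMap.ker (LinearMap.lsmul R QM s) := by
        rw [Submodule.span_le]
        intro t ht
        rw [SetLike.mem_coe, LinearMap.mem_ker, LinearMap.lsmul_apply]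
        exact hskill t ht
      have := hsub hmem
      rw [LinearMap.mem_ker, LinearMap.lsmul_apply] at this
      exact Subtype.ext this
    refine E_of_finite (fun q hq hann m'' => ?_) m
    have hpq : p < q := by
      have hpsub : p ≤ q := by
        intro r hr
        apply hann
        rw [Module.mem_annihilator]
        intro m'
        exact Subtype.ext (hp_smul r hr m')
      have hsq : s ∈ q := by
        apply hann
        rw [Module.mem_annihilator]
        exact hsN'
      exact lt_of_le_of_ne hpsub (fun he => hsp (he ▸ hsq))
    exact IH q hpq hq m''
  exact E_of_ses_left fbar (LinearMap.range fbar).mkQ hfinj hgsurj hexact (hk p hp n) (hQ (n+1))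


/-- Conclusion: flatness of the resolved module from `Tor_1(R/I, M) = 0` for all `I`. -/
lemma flat_of_E {M : Type u} [AddCommGroup M] [Module R M]
    (ε : Γ.C 0 →ₗ[R] M) (hsurj : Function.Surjective ε) (hex : Function.Exact (Γ.D 0) ε)
    (hE : ∀ I : Ideal R, Γ.E (R ⧸ I) 0) : Module.Flat R M := by
  rw [Module.Flat.iff_rTensor_injective']
  intro I
  rw [← LinearMap.ker_eq_bot, eq_bot_iff]
  intro ξ hξ
  rw [LinearMap.mem_ker] at hξ
  rw [Submodule.mem_bot]
  -- multiplication maps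
  set m0 : I ⊗[R] Γ.C 0 →ₗ[R] Γ.C 0 :=
    (TensorProduct.lid R (Γ.C 0)).toLinearMap ∘ₗ rTensor (Γ.C 0) I.subtype with hm0
  set m1 : I ⊗[R] Γ.C 1 →ₗ[R] Γ.C 1 :=
    (TensorProduct.lid R (Γ.C 1)).toLinearMap ∘ₗ rTensor (Γ.C 1) I.subtype with hm1
  -- reduction maps
  set q0 : Γ.C 0 →ₗ[R] (R ⧸ I) ⊗[R] Γ.C 0 :=
    rTensor (Γ.C 0) I.mkQ ∘ₗ (TensorProduct.lid R (Γ.C 0)).symm.toLinearMap with hq0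
  set q1 : Γ.C 1 →ₗ[R] (R ⧸ I) ⊗[R] Γ.C 1 :=
    rTensor (Γ.C 1) I.mkQ ∘ₗ (TensorProduct.lid R (Γ.C 1)).symm.toLinearMap with hq1
  set q2 : Γ.C 2 →ₗ[R] (R ⧸ I) ⊗[R] Γ.C 2 :=
    rTensor (Γ.C 2) I.mkQ ∘ₗ (TensorProduct.lid R (Γ.C 2)).symm.toLinearMap with hq2
  have hq_simp : ∀ (n : ℕ) (c : Γ.C n),
      (rTensor (Γ.C n) I.mkQ ∘ₗ (TensorProduct.lid R (Γ.C n)).symm.toLinearMap) c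
        = I.mkQ 1 ⊗ₜ[R] c := by
    intro n c
    simp [TensorProduct.lid_symm_apply]
  -- lift ξ to I ⊗ C 0
  obtain ⟨ξ', hξ'⟩ := lTensor_surjective (↥I) hsurj ξ
  set y0 : Γ.C 0 := m0 ξ' with hy0def
  have hy0 : ε y0 = 0 := by
    have hcomm : ∀ v : I ⊗[R] Γ.C 0, ε (m0 v)
        = TensorProduct.lid R M (rTensor M I.subtype (lTensor I ε v)) := by
      intro v
      induction v using TensorProduct.induction_on with
      | zero => simp
      | tmul i c => simp [hm0]
      | add x y hx hy => rw [map_add, map_add, map_add, map_add, map_add, hx, hy]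
    rw [hy0def, hcomm, hξ', hξ, map_zero]
  obtain ⟨y1, hy1⟩ := (hex y0).mp hy0
  -- q1 y1 is a cycle
  have hq1cycle : lTensor (R ⧸ I) (Γ.D 0) (q1 y1) = 0 := by
    have h1 : lTensor (R ⧸ I) (Γ.D 0) (q1 y1) = q0 (Γ.D 0 y1) := by
      rw [hq1, hq0, hq_simp, hq_simp]
      simp
    rw [h1, hy1, hy0def]
    -- q0 ∘ m0 = 0
    have : ∀ v : I ⊗[R] Γ.C 0, q0 (m0 v) = 0 := by
      intro v
      induction v using TensorProduct.induction_on with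
      | zero => simp
      | tmul i c =>
          rw [hm0, hq0]
          simp only [LinearMap.comp_apply, rTensor_tmul, LinearEquiv.coe_coe]
          rw [LinearEquiv.symm_apply_apply, rTensor_tmul]
          have hz : I.mkQ (I.subtype i) = 0 := (Submodule.Quotient.mk_eq_zero I).mpr i.2
          rw [hz, TensorProduct.zero_tmul]
      | add x y hx hy => rw [map_add, map_add, hx, hy, add_zero]
    exact this ξ'
  obtain ⟨wbar, hwbar⟩ := hE I (q1 y1) hq1cycle
  obtain ⟨w, hw⟩ : ∃ w : Γ.C 2, q2 w = wbar := by
    have hsurj2 : Function.Surjective q2 := by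
      rw [hq2]
      exact (rTensor_surjective (Γ.C 2) (Submodule.mkQ_surjective I)).comp
        (TensorProduct.lid R (Γ.C 2)).symm.surjective
    exact hsurj2 wbar
  have hker : q1 (y1 - Γ.D 1 w) = 0 := by
    have h1 : q1 (Γ.D 1 w) = lTensor (R ⧸ I) (Γ.D 1) (q2 w) := by
      rw [hq1, hq2, hq_simp, hq_simp]
      simp
    rw [map_sub, h1, hw, hwbar, sub_self]
  obtain ⟨η, hη⟩ : ∃ η : I ⊗[R] Γ.C 1, m1 η = y1 - Γ.D 1 w := by
    have hexI : Function.Exact (rTensor (Γ.C 1) I.subtype) (rTensor (Γ.C 1) I.mkQ) :=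
      rTensor_exact (Γ.C 1) (LinearMap.exact_subtype_mkQ I) (Submodule.mkQ_surjective I)
    have h2 : rTensor (Γ.C 1) I.mkQ ((TensorProduct.lid R (Γ.C 1)).symm (y1 - Γ.D 1 w)) = 0 := by
      rw [hq1] at hker
      exact hker
    obtain ⟨η, hη⟩ := (hexI _).mp h2
    refine ⟨η, ?_⟩
    rw [hm1, LinearMap.comp_apply, hη]
    simp
  have hm0inj : Function.Injective m0 := by
    rw [hm0]
    exact (TensorProduct.lid R (Γ.C 0)).injective.comp
      (Module.Flat.rTensor_preserves_injective_linearMap I.subtype I.injective_subtype)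
  have hcomm1 : ∀ v : I ⊗[R] Γ.C 1, Γ.D 0 (m1 v) = m0 (lTensor I (Γ.D 0) v) := by
    intro v
    induction v using TensorProduct.induction_on with
    | zero => simp
    | tmul i c => simp [hm0, hm1]
    | add x y hx hy => rw [map_add, map_add, map_add, map_add, hx, hy]
  have hξ'eq : ξ' = lTensor I (Γ.D 0) η := by
    apply hm0inj
    rw [← hcomm1, hη, map_sub, hy1, ← LinearMap.comp_apply (Γ.D 0) (Γ.D 1), Γ.dd 0]
    simp [hy0def]
  have hεD : ε ∘ₗ Γ.D 0 = 0 := by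
    ext c
    exact hex.apply_apply_eq_zero c
  rw [← hξ', hξ'eq, ← LinearMap.comp_apply, ← lTensor_comp, hεD, lTensor_zero,
    LinearMap.zero_apply]

end ResData


/-- Let `R` be a noetherian commutative ring and `M` an `R`-module.
If `Ext^i_R(M, κ(p)) = 0` for every `i > 0` and every prime ideal `p` of `R`, then
`M` is a flat `R`-module. -/
theorem stmt_13 (R : Type u) [CommRing R] [IsNoetherianRing R]
    (M : Type u) [AddCommGroup M] [Module R M]
    (h : ∀ (i : ℕ), 0 < i → ∀ (p : Ideal R) [p.IsPrime],
      Subsingleton (((Ext R (ModuleCat.{u} R) i).obj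
        (Opposite.op (ModuleCat.of R M))).obj (ModuleCat.of R (kappa p)))) :
    Module.Flat R M := by
  obtain ⟨P⟩ := HasProjectiveResolution.out (Z := ModuleCat.of R M)
  set Γ : ResData R := {
    C := fun n => P.complex.X n
    acg := fun n => inferInstance
    mod := fun n => inferInstance
    D := fun n => (P.complex.d (n+1) n).hom
    flat := fun n => by
      have h1 : CategoryTheory.Projective (ModuleCat.of R (P.complex.X n)) := P.projective n
      have h2 : Module.Projective R (P.complex.X n) := (IsProjective.iff_projective _).mpr h1
      haveI := h2
      infer_instance
    dd := fun n => congrArg ModuleCat.Hom.hom (P.complex.d_comp_d (n+2) (n+1) n)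
    hexact := fun n => by
      have hs := P.exact_succ n
      rw [CategoryTheory.ShortComplex.moduleCat_exact_iff_range_eq_ker] at hs
      rw [LinearMap.exact_iff, ← hs] } with hΓ
  -- the Hom-complex exactness from the Ext hypothesis
  have hHom : ∀ (p : Ideal R) (_ : p.IsPrime) (n : ℕ),
      ∀ φ : Γ.C (n+1) →ₗ[R] kappa p, φ ∘ₗ Γ.D (n+1) = 0 →
        ∃ ψ : Γ.C n →ₗ[R] kappa p, ψ ∘ₗ Γ.D n = φ := by
    intro p hp n
    haveI := hp
    have hsub := h (n+1) (Nat.succ_pos n) p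
    set K : ModuleCat.{u} R := ModuleCat.of R (kappa p) with hK
    have e := P.isoExt (R := R) (n+1) K
    have hz : Limits.IsZero ((P.complex.linearYonedaObj R K).homology (n+1)) := by
      have : Subsingleton ((P.complex.linearYonedaObj R K).homology (n+1) : Type u) :=
        (e.toLinearEquiv.toEquiv.symm).subsingleton
      exact ModuleCat.isZero_of_subsingleton _
    have hex := (HomologicalComplex.exactAt_iff_isZero_homology _ _).mpr hz
    rw [HomologicalComplex.exactAt_iff' _ n (n+1) (n+2) (by simp) (by simp)] at hex
    rw [CategoryTheory.ShortComplex.moduleCat_exact_iff] at hex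
    intro φ hφ
    let φ' : P.complex.X (n+1) ⟶ K := ModuleCat.ofHom φ
    have h2 := hex φ' ?_
    · obtain ⟨ψ, hψ⟩ := h2
      refine ⟨ψ.hom, ?_⟩
      simp only [HomologicalComplex.shortComplexFunctor'_obj_f,
        ChainComplex.linearYonedaObj_d] at hψ
      rw [show φ = φ'.hom from rfl, ← hψ]
      rfl
    · show (ChainComplex.linearYonedaObj _ _ _).d (n+1) (n+2) φ' = 0
      simp only [ChainComplex.linearYonedaObj_d]
      show P.complex.d (n+2) (n+1) ≫ φ' = 0
      exact ModuleCat.hom_ext hφ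
  -- `Tor_{n+1}(κ(p), M) = 0`
  have hk : ∀ (p : Ideal R) (_ : p.IsPrime), ∀ n, Γ.E (kappa p) n := by
    intro p hp n
    haveI := hp
    intro z hz
    exact exact_lTensor_of_hom_exact (kappa p) (Γ.D (n+1)) (Γ.D n) (hHom p hp n) z hz
  -- `Tor_1(R ⧸ I, M) = 0` for every ideal
  have hE : ∀ I : Ideal R, Γ.E (R ⧸ I) 0 := by
    intro I
    haveI : Module.Finite R (R ⧸ I) :=
      Module.Finite.of_surjective I.mkQ (Submodule.mkQ_surjective I)
    exact ResData.E_of_finite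
      (fun q hq _ n => ResData.E_quotient_prime hk q hq n) 0
  -- conclude
  refine ResData.flat_of_E (M := M) (P.π.f 0).hom ?_ ?_ hE
  · have : CategoryTheory.Epi (P.π.f 0) := inferInstance
    exact (ModuleCat.epi_iff_surjective _).mp this
  · have hc : (CategoryTheory.ShortComplex.mk (P.complex.d 1 0) (P.π.f 0)
        P.complex_d_comp_π_f_zero).Exact :=
      CategoryTheory.ShortComplex.exact_of_g_is_cokernel _ P.isColimitCokernelCofork
    rw [CategoryTheory.ShortComplex.moduleCat_exact_iff_range_eq_ker] at hc
    exact fun y => SetLike.ext_iff.mp hc.symm y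
end

section
/- Let R be a commutative ring, p a prime ideal of R, and M an R-module. Then for every i ≥ 0 there is an isomorphism Ext^i_R(M, κ(p)) ≅ Hom_{κ(p)}(Tor_i^R(κ(p), M), κ(p)) of κ(p)-vector spaces (duality between Ext into the residue field and Tor with the residue field). -/
open CategoryTheory

universe u

set_option maxHeartbeats 1600000

open TensorProduct

section Duality

variable {R : Type u} [CommRing R] {K : Type u} [Field K] [Algebra R K]

/-- An `R`-linear functional on a `K`-vector space is automatically `K`-linear,
provided every element of `K` is a "fraction" over `R`. -/
theorem rlinear_ksemilinear
    (hK : ∀ c : K, ∃ r s : R, algebraMap R K s ≠ 0 ∧ algebraMap R K s * c = algebraMap R K r)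
    {V : Type u} [AddCommGroup V] [Module R V] [Module K V] [IsScalarTower R K V]
    (β : V →ₗ[R] K) (c : K) (x : V) : β (c • x) = c • β x := by
  obtain ⟨r, s, hs, hrs⟩ := hK c
  have h1 : s • (c • x) = r • x := by
    rw [← algebraMap_smul K s (c • x), ← algebraMap_smul K r x, smul_smul, hrs]
  have h2 := congrArg β h1
  rw [β.map_smul, β.map_smul] at h2
  have h3 : algebraMap R K s * β (c • x) = algebraMap R K r * β x := by
    rw [← smul_eq_mul, ← smul_eq_mul, algebraMap_smul, algebraMap_smul]; exact h2
  rw [← hrs, mul_assoc] at h3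
  rw [smul_eq_mul]
  exact mul_left_cancel₀ hs h3


variable {A B C' : Type u} [AddCommGroup A] [AddCommGroup B] [AddCommGroup C']
  [Module R A] [Module R B] [Module R C']

theorem duality_lemma
    (hK : ∀ c : K, ∃ r s : R, algebraMap R K s ≠ 0 ∧ algebraMap R K s * c = algebraMap R K r)
    (δ : A →ₗ[R] B) (ε : B →ₗ[R] C') (hc : ε.comp δ = 0)
    (hlc : (LinearMap.lcomp R K δ).comp (LinearMap.lcomp R K ε) = 0)
    (hlt : (LinearMap.lTensor K ε).comp (LinearMap.lTensor K δ) = 0) :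
    Nonempty
      ((ShortComplex.moduleCatMk _ _ hlc).moduleCatLeftHomologyData.H ≃ₗ[R]
        ((ShortComplex.moduleCatMk _ _ hlt).moduleCatLeftHomologyData.H →ₗ[R] K)) := by
  classical
  -- concrete maps
  let v : (B →ₗ[R] K) →ₗ[R] (A →ₗ[R] K) := LinearMap.lcomp R K δ
  let f : (K ⊗[R] A) →ₗ[R] (K ⊗[R] B) := LinearMap.lTensor K δ
  let g : (K ⊗[R] B) →ₗ[R] (K ⊗[R] C') := LinearMap.lTensor K ε
  have hvu : ∀ ψ : C' →ₗ[R] K, v (LinearMap.lcomp R K ε ψ) = 0 := fun ψ =>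
    congrFun (congrArg (fun (h : (C' →ₗ[R] K) →ₗ[R] (A →ₗ[R] K)) => (h : _ → _)) hlc) ψ
  have hgf : ∀ x : K ⊗[R] A, g (f x) = 0 := fun x =>
    congrFun (congrArg (fun (h : (K ⊗[R] A) →ₗ[R] (K ⊗[R] C')) => (h : _ → _)) hlt) x
  let tS : (C' →ₗ[R] K) →ₗ[R] ↥(LinearMap.ker v) :=
    LinearMap.codRestrict _ (LinearMap.lcomp R K ε) (fun ψ => LinearMap.mem_ker.2 (hvu ψ))
  let tT : (K ⊗[R] A) →ₗ[R] ↥(LinearMap.ker g) :=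
    LinearMap.codRestrict _ f (fun x => LinearMap.mem_ker.2 (hgf x))
  letI : AddCommGroup ↥(LinearMap.ker v) := Submodule.addCommGroup _
  letI : AddCommGroup ↥(LinearMap.ker g) := Submodule.addCommGroup _
  suffices h : Nonempty
      ((↥(LinearMap.ker v) ⧸ LinearMap.range tS) ≃ₗ[R]
        ((↥(LinearMap.ker g) ⧸ LinearMap.range tT) →ₗ[R] K)) by
    exact h
  -- the K-linear version of `g`
  let gK : (K ⊗[R] B) →ₗ[K] (K ⊗[R] C') := ε.baseChange K
  have hgK : ∀ w, gK w = g w := fun w => by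
    rw [LinearMap.baseChange_eq_ltensor]
  have hφcomp : ∀ φ : ↥(LinearMap.ker v), ∀ a : A, φ.1 (δ a) = 0 := by
    intro φ a
    have h2 : v φ.1 = 0 := φ.2
    exact congrFun (congrArg (fun (h : A →ₗ[R] K) => (h : A → K)) h2) a
  have hliftker : ∀ φ : ↥(LinearMap.ker v),
      LinearMap.range tT ≤
        LinearMap.ker (((φ.1.liftBaseChange K).restrictScalars R).comp
          (LinearMap.ker g).subtype) := by
    rintro φ _ ⟨x, rfl⟩
    rw [LinearMap.mem_ker]
    show (φ.1.liftBaseChange K) (f x) = 0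
    induction x using TensorProduct.induction_on with
    | zero => simp
    | tmul a y =>
      show (φ.1.liftBaseChange K) (a ⊗ₜ[R] δ y) = 0
      rw [LinearMap.liftBaseChange_tmul, hφcomp φ y, smul_zero]
    | add u' v' hu hv =>
      rw [map_add, map_add, hu, hv, add_zero]
  let Φfun : ↥(LinearMap.ker v) → ((↥(LinearMap.ker g) ⧸ LinearMap.range tT) →ₗ[R] K) := fun φ =>
    Submodule.liftQ _ (((φ.1.liftBaseChange K).restrictScalars R).comp
      (LinearMap.ker g).subtype) (hliftker φ)
  have hΦfun : ∀ (φ : ↥(LinearMap.ker v)) (w : ↥(LinearMap.ker g)),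
      Φfun φ (Submodule.Quotient.mk w) = φ.1.liftBaseChange K w.1 :=
    fun φ w => rfl
  have hliftadd : ∀ (φ ψ : B →ₗ[R] K) (w : K ⊗[R] B),
      (φ + ψ).liftBaseChange K w = φ.liftBaseChange K w + ψ.liftBaseChange K w := by
    intro φ ψ w
    induction w using TensorProduct.induction_on with
    | zero => simp
    | tmul a y => rw [LinearMap.liftBaseChange_tmul, LinearMap.liftBaseChange_tmul,
        LinearMap.liftBaseChange_tmul, LinearMap.add_apply, smul_add]
    | add u' v' hu hv =>
      rw [map_add, map_add, map_add, hu, hv]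
      abel
  have hliftsmul : ∀ (r : R) (φ : B →ₗ[R] K) (w : K ⊗[R] B),
      (r • φ).liftBaseChange K w = r • (φ.liftBaseChange K w) := by
    intro r φ w
    induction w using TensorProduct.induction_on with
    | zero => simp
    | tmul a y =>
      rw [LinearMap.liftBaseChange_tmul, LinearMap.liftBaseChange_tmul, LinearMap.smul_apply,
        smul_comm]
    | add u' v' hu hv => rw [map_add, map_add, hu, hv, smul_add]
  let Φ₀ : ↥(LinearMap.ker v) →ₗ[R] ((↥(LinearMap.ker g) ⧸ LinearMap.range tT) →ₗ[R] K) :=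
    { toFun := Φfun
      map_add' := fun φ ψ => by
        apply Submodule.linearMap_qext
        ext w
        show Φfun (φ + ψ) (Submodule.Quotient.mk w)
          = Φfun φ (Submodule.Quotient.mk w) + Φfun ψ (Submodule.Quotient.mk w)
        rw [hΦfun, hΦfun, hΦfun]
        have : ((φ + ψ : ↥(LinearMap.ker v)) : B →ₗ[R] K) = φ.1 + ψ.1 := rfl
        rw [this, hliftadd φ.1 ψ.1 w.1]
      map_smul' := fun r φ => by
        apply Submodule.linearMap_qext
        ext w
        show Φfun (r • φ) (Submodule.Quotient.mk w)
          = (r • Φfun φ) (Submodule.Quotient.mk w)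
        rw [hΦfun]
        have : ((r • φ : ↥(LinearMap.ker v)) : B →ₗ[R] K) = r • φ.1 := rfl
        rw [this, hliftsmul r φ.1 w.1]
        rfl }
  have hcompfact : ∀ (ψ : C' →ₗ[R] K) (w : K ⊗[R] B),
      (ψ.comp ε).liftBaseChange K w = ψ.liftBaseChange K (g w) := by
    intro ψ w
    induction w using TensorProduct.induction_on with
    | zero => simp
    | tmul a y =>
      show a • ψ (ε y) = ψ.liftBaseChange K (a ⊗ₜ[R] ε y)
      rw [LinearMap.liftBaseChange_tmul]
    | add u' v' hu hv => rw [map_add, map_add, map_add, hu, hv]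
  have hker2 : LinearMap.range tS ≤ LinearMap.ker Φ₀ := by
    rintro _ ⟨ψ, rfl⟩
    rw [LinearMap.mem_ker]
    apply Submodule.linearMap_qext
    ext w
    have h1 : (tS ψ).1 = ψ.comp ε := rfl
    have h2 : g w.1 = 0 := w.2
    show Φfun (tS ψ) (Submodule.Quotient.mk w) = 0
    rw [hΦfun, h1, hcompfact, h2, map_zero]
  let Φ : (↥(LinearMap.ker v) ⧸ LinearMap.range tS) →ₗ[R]
      ((↥(LinearMap.ker g) ⧸ LinearMap.range tT) →ₗ[R] K) :=
    Submodule.liftQ _ Φ₀ hker2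
  -- injectivity
  have hinj : Function.Injective Φ := by
    rw [← LinearMap.ker_eq_bot, LinearMap.ker_eq_bot']
    intro q hq
    obtain ⟨φ, rfl⟩ := Submodule.Quotient.mk_surjective _ q
    rw [Submodule.Quotient.mk_eq_zero]
    rw [Submodule.liftQ_apply] at hq
    have h0 : ∀ w : K ⊗[R] B, g w = 0 → φ.1.liftBaseChange K w = 0 := by
      intro w hw
      have := congrFun (congrArg (fun (h : _ →ₗ[R] K) => (h : _ → K)) hq)
        (Submodule.Quotient.mk (⟨w, LinearMap.mem_ker.2 hw⟩ : ↥(LinearMap.ker g)))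
      have h1 : Φfun φ (Submodule.Quotient.mk (⟨w, LinearMap.mem_ker.2 hw⟩ :
          ↥(LinearMap.ker g))) = 0 := this
      rw [hΦfun] at h1
      exact h1
    set φ' := φ.1.liftBaseChange K with hφ'def
    have hkerle : LinearMap.ker gK ≤ LinearMap.ker φ' := by
      intro w hw
      rw [LinearMap.mem_ker] at hw ⊢
      exact h0 w (by rw [← hgK]; exact hw)
    let φbar : ((K ⊗[R] B) ⧸ LinearMap.ker gK) →ₗ[K] K :=
      Submodule.liftQ _ φ' hkerle
    obtain ⟨χ, hχ⟩ := LinearMap.exists_extend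
      (φbar.comp (gK.quotKerEquivRange.symm.toLinearMap))
    have hfac : ∀ w, χ (gK w) = φ' w := by
      intro w
      have h1 : gK.quotKerEquivRange (Submodule.Quotient.mk w)
          = ⟨gK w, LinearMap.mem_range.2 ⟨w, rfl⟩⟩ :=
        Subtype.ext (LinearMap.quotKerEquivRange_apply_mk gK w)
      have h2 := congrFun (congrArg (fun (h : _ →ₗ[K] K) => (h : _ → K)) hχ)
        (⟨gK w, LinearMap.mem_range.2 ⟨w, rfl⟩⟩ : ↥(LinearMap.range gK))
      dsimp at h2
      rw [← h1, LinearEquiv.symm_apply_apply, Submodule.liftQ_apply] at h2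
      exact h2
    refine ⟨(LinearMap.liftBaseChangeEquiv K).symm χ, ?_⟩
    apply Subtype.ext
    show LinearMap.lcomp R K ε ((LinearMap.liftBaseChangeEquiv K).symm χ) = φ.1
    ext y
    show ((LinearMap.liftBaseChangeEquiv K).symm χ) (ε y) = φ.1 y
    rw [LinearMap.liftBaseChangeEquiv_symm_apply]
    have h3 : (1 : K) ⊗ₜ[R] ε y = gK ((1 : K) ⊗ₜ[R] y) := by
      rw [LinearMap.baseChange_tmul]
    rw [h3, hfac]
    rw [hφ'def, LinearMap.liftBaseChange_tmul, one_smul]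
  -- surjectivity
  have hsurj : Function.Surjective Φ := by
    intro α
    have hmemg : ∀ w : ↥(LinearMap.ker gK), w.1 ∈ LinearMap.ker g := fun w =>
      LinearMap.mem_ker.2 (by rw [← hgK]; exact w.2)
    let β₀ : ↥(LinearMap.ker gK) →ₗ[R] K :=
      { toFun := fun w => α (Submodule.Quotient.mk ⟨w.1, hmemg w⟩)
        map_add' := fun w w' => by
          rw [← map_add, ← Submodule.Quotient.mk_add]
          rfl
        map_smul' := fun r w => by
          rw [RingHom.id_apply, ← map_smul, ← Submodule.Quotient.mk_smul]
          rfl }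
    let βK : ↥(LinearMap.ker gK) →ₗ[K] K :=
      { toFun := β₀
        map_add' := β₀.map_add
        map_smul' := fun c w => by
          rw [RingHom.id_apply]
          exact rlinear_ksemilinear hK β₀ c w }
    obtain ⟨φ', hφ'⟩ := LinearMap.exists_extend βK
    have hφ'val : ∀ w : ↥(LinearMap.ker gK), φ' w.1 = β₀ w := by
      intro w
      have := congrFun (congrArg (fun (h : _ →ₗ[K] K) => (h : _ → K)) hφ') w
      exact this
    let φ : B →ₗ[R] K := (LinearMap.liftBaseChangeEquiv K).symm φ'
    have hlift : φ.liftBaseChange K = φ' :=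
      (LinearMap.liftBaseChangeEquiv K).apply_symm_apply φ'
    have hφmem : φ ∈ LinearMap.ker v := by
      rw [LinearMap.mem_ker]
      ext a
      show φ (δ a) = 0
      have hεδ : ε (δ a) = 0 :=
        congrFun (congrArg (fun (h : A →ₗ[R] C') => (h : A → C')) hc) a
      have hmemZ : (1 : K) ⊗ₜ[R] δ a ∈ LinearMap.ker gK := by
        rw [LinearMap.mem_ker, LinearMap.baseChange_tmul, hεδ, tmul_zero]
      show ((LinearMap.liftBaseChangeEquiv K).symm φ') (δ a) = 0
      rw [LinearMap.liftBaseChangeEquiv_symm_apply]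
      have h4 := hφ'val ⟨(1 : K) ⊗ₜ[R] δ a, hmemZ⟩
      rw [h4]
      show α (Submodule.Quotient.mk ⟨(1 : K) ⊗ₜ[R] δ a, _⟩) = 0
      have h5 : (⟨(1 : K) ⊗ₜ[R] δ a, hmemg ⟨_, hmemZ⟩⟩ : ↥(LinearMap.ker g))
          = tT ((1 : K) ⊗ₜ[R] a) := by
        apply Subtype.ext
        show (1 : K) ⊗ₜ[R] δ a = f ((1 : K) ⊗ₜ[R] a)
        rfl
      rw [h5]
      have h6 : (Submodule.Quotient.mk (tT ((1 : K) ⊗ₜ[R] a)) :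
          ↥(LinearMap.ker g) ⧸ LinearMap.range tT) = 0 :=
        (Submodule.Quotient.mk_eq_zero _).2 ⟨_, rfl⟩
      rw [h6, map_zero]
    refine ⟨Submodule.Quotient.mk (⟨φ, hφmem⟩ : ↥(LinearMap.ker v)), ?_⟩
    rw [Submodule.liftQ_apply]
    apply Submodule.linearMap_qext
    ext w
    show Φfun ⟨φ, hφmem⟩ (Submodule.Quotient.mk w) = α (Submodule.Quotient.mk w)
    rw [hΦfun]
    show (φ.liftBaseChange K) w.1 = _
    rw [hlift]
    have hwK : w.1 ∈ LinearMap.ker gK := by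
      rw [LinearMap.mem_ker, hgK]
      exact w.2
    rw [hφ'val ⟨w.1, hwK⟩]
    show α (Submodule.Quotient.mk ⟨w.1, _⟩) = α (Submodule.Quotient.mk w)
    congr 1
  exact ⟨LinearEquiv.ofBijective Φ ⟨hinj, hsurj⟩⟩

end Duality

theorem kappa_fraction {R : Type u} [CommRing R] (p : Ideal R) [p.IsPrime] (c : kappa p) :
    ∃ r s : R, algebraMap R (kappa p) s ≠ 0 ∧
      algebraMap R (kappa p) s * c = algebraMap R (kappa p) r := by
  obtain ⟨y, rfl⟩ := IsLocalRing.residue_surjective (R := Localization.AtPrime p) c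
  obtain ⟨⟨r, s⟩, h⟩ := IsLocalization.surj p.primeCompl y
  refine ⟨r, s, ?_, ?_⟩
  · have hAlg : algebraMap R (kappa p) (s : R)
        = IsLocalRing.residue _ (algebraMap R (Localization.AtPrime p) s) := by
      rw [IsScalarTower.algebraMap_apply R (Localization.AtPrime p) (kappa p)]
      rfl
    rw [hAlg]
    have hu : IsUnit (algebraMap R (Localization.AtPrime p) (s : R)) :=
      IsLocalization.map_units _ s
    exact ((IsLocalRing.residue (Localization.AtPrime p)).isUnit_map hu).ne_zero
  · rw [IsScalarTower.algebraMap_apply R (Localization.AtPrime p) (kappa p),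
      IsScalarTower.algebraMap_apply R (Localization.AtPrime p) (kappa p)]
    show IsLocalRing.residue _ _ * IsLocalRing.residue _ y = IsLocalRing.residue _ _
    rw [← map_mul, mul_comm, h]

/-- Let `R` be a commutative ring, `p` a prime ideal of `R` and `M`
an `R`-module.  For every `i ≥ 0` there is an isomorphism
`Ext^i_R(M, κ(p)) ≅ Hom_{κ(p)}(Tor_i^R(κ(p), M), κ(p))`.
(Both sides are `κ(p)`-vector spaces; since `κ(p)` is a localization of a quotient of
`R`, an `R`-linear map between `κ(p)`-vector spaces is automatically `κ(p)`-linear, so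
the isomorphism of `κ(p)`-vector spaces is expressed here as an `R`-linear equivalence,
and likewise `Hom_{κ(p)}(-, κ(p))` coincides with the `R`-module of `R`-linear maps.) -/
theorem stmt_15 (R : Type u) [CommRing R] (p : Ideal R) [p.IsPrime]
    (M : Type u) [AddCommGroup M] [Module R M] (i : ℕ) :
    Nonempty
      ((((Ext R (ModuleCat.{u} R) i).obj
          (Opposite.op (ModuleCat.of R M))).obj (ModuleCat.of R (kappa p))) ≃ₗ[R]
        ((((Tor (ModuleCat.{u} R) i).obj
          (ModuleCat.of R (kappa p))).obj (ModuleCat.of R M)) →ₗ[R] kappa p)) := by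
  classical
  obtain ⟨P⟩ := (inferInstance : HasProjectiveResolution (ModuleCat.of R M)).out
  obtain ⟨j₀, hprev, hnext⟩ : ∃ j₀, (ComplexShape.up ℕ).prev i = j₀ ∧
      (ComplexShape.down ℕ).next i = j₀ := by
    cases i with
    | zero => exact ⟨0, CochainComplex.prev_nat_zero, ChainComplex.next_nat_zero⟩
    | succ n => exact ⟨n, CochainComplex.prev_nat_succ n, ChainComplex.next_nat_succ n⟩
  let Xc := P.complex
  let δ : ↑(Xc.X (i+1)) →ₗ[R] ↑(Xc.X i) := (Xc.d (i+1) i).hom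
  let ε : ↑(Xc.X i) →ₗ[R] ↑(Xc.X j₀) := (Xc.d i j₀).hom
  have hc : ε.comp δ = 0 := congrArg ModuleCat.Hom.hom (Xc.d_comp_d (i+1) i j₀)
  have hlc : (LinearMap.lcomp R (kappa p) δ).comp (LinearMap.lcomp R (kappa p) ε) = 0 := by
    ext ψ a
    have h1 : ε (δ a) = 0 :=
      congrFun (congrArg (fun (h : _ →ₗ[R] _) => (h : _ → _)) hc) a
    show ψ (ε (δ a)) = 0
    rw [h1, map_zero]
  have hlt : (LinearMap.lTensor (kappa p) ε).comp (LinearMap.lTensor (kappa p) δ) = 0 := by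
    rw [← LinearMap.lTensor_comp, hc, LinearMap.lTensor_zero]
  obtain ⟨e⟩ := duality_lemma (kappa_fraction p) δ ε hc hlc hlt
  let kC : ModuleCat.{u} R := ModuleCat.of R (kappa p)
  let CE := Xc.linearYonedaObj R kC
  have hnextE : (ComplexShape.up ℕ).next i = i + 1 := CochainComplex.next ℕ i
  have hprevT : (ComplexShape.down ℕ).prev i = i + 1 := ChainComplex.prev ℕ i
  let SE := ShortComplex.moduleCatMk _ _ hlc
  have eSE : CE.sc' j₀ i (i+1) ≅ SE := by
    refine ShortComplex.isoMk (ModuleCat.homLinearEquiv (S := R)).toModuleIso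
      (ModuleCat.homLinearEquiv (S := R)).toModuleIso
      (ModuleCat.homLinearEquiv (S := R)).toModuleIso ?_ ?_
    · ext φ
      rfl
    · ext φ
      rfl
  let extIso : (((Ext R (ModuleCat.{u} R) i).obj
      (Opposite.op (ModuleCat.of R M))).obj kC) ≅ SE.moduleCatLeftHomologyData.H :=
    P.isoExt i kC ≪≫ ShortComplex.homologyMapIso (CE.isoSc' j₀ i (i+1) hprev hnextE ≪≫ eSE)
      ≪≫ SE.moduleCatHomologyIso
  let F := (MonoidalCategory.tensoringLeft (ModuleCat.{u} R)).obj kC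
  let CT := (F.mapHomologicalComplex (ComplexShape.down ℕ)).obj Xc
  let ST := ShortComplex.moduleCatMk _ _ hlt
  have eST : CT.sc' (i+1) i j₀ ≅ ST := by
    refine ShortComplex.isoMk (Iso.refl _) (Iso.refl _) (Iso.refl _) ?_ ?_
    · ext x
      exact (congrArg (fun t => t) rfl)
    · ext x
      exact (congrArg (fun t => t) rfl)
  let torIso : (((Tor (ModuleCat.{u} R) i).obj kC).obj (ModuleCat.of R M))
      ≅ ST.moduleCatLeftHomologyData.H :=
    P.isoLeftDerivedObj F i ≪≫
      ShortComplex.homologyMapIso (CT.isoSc' (i+1) i j₀ hprevT hnext ≪≫ eST)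
      ≪≫ ST.moduleCatHomologyIso
  exact ⟨extIso.toLinearEquiv.trans (e.trans
    (LinearEquiv.arrowCongr torIso.toLinearEquiv.symm (LinearEquiv.refl R (kappa p))))⟩
end
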